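/- Suppose p ≡ 1 (mod 4) is prime, and B ⊆ Z_p satisfies B - B ⊆ Q ∪ {0} with |B| = s and p > s². If the function φ₁(t) = 1 + Σ_{b∈B} χ(b - t) satisfies 0 ≤ φ₁(t) ≤ s - 1 for all t ∉ B, then (s+1)(p - s²) ≤ (s-1)(p - s²), which is a contradiction; hence there exists t ∉ B with φ₁(t) < 0 or φ₁(t) > s - 1. -/

import Mathlib

open scoped Classical

noncomputable def quadChar {F : Type*} [Field F] (x : F) : ℤ :=
  if x = 0 then 0 else if IsSquare x then 1 else -1

section Aux

variable {p : ℕ} [hp : Fact p.Prime]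

lemma quadChar_eq_quadraticChar (hodd : p % 4 = 1) (x : ZMod p) :
    quadChar x = quadraticChar (ZMod p) x := by
  rw [quadraticChar_apply, quadraticCharFun, quadChar]
  split_ifs <;> rfl

lemma ringChar_ne_two (hodd : p % 4 = 1) : ringChar (ZMod p) ≠ 2 := by
  rw [ZMod.ringChar_zmod_n]
  omega

lemma sum_shift (hodd : p % 4 = 1) (b : ZMod p) :
    ∑ t : ZMod p, quadraticChar (ZMod p) (b - t) = 0 := by
  rw [← quadraticChar_sum_zero (ringChar_ne_two hodd)]
  exact Fintype.sum_equiv (Equiv.subLeft b) _ _ (fun t => rfl)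

lemma sum_mul_shift (hodd : p % 4 = 1) {c : ZMod p} (hc : c ≠ 0) :
    ∑ u : ZMod p, quadraticChar (ZMod p) u * quadraticChar (ZMod p) (u + c) = -1 := by
  classical
  have h1 : ∑ u : ZMod p, quadraticChar (ZMod p) u * quadraticChar (ZMod p) (u + c)
      = ∑ u ∈ (Finset.univ : Finset (ZMod p)) \ {0},
          quadraticChar (ZMod p) u * quadraticChar (ZMod p) (u + c) := by
    rw [Finset.sum_sdiff_eq_sub (Finset.subset_univ _)]
    simp
  have h2 : ∑ u ∈ (Finset.univ : Finset (ZMod p)) \ {0},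
        quadraticChar (ZMod p) u * quadraticChar (ZMod p) (u + c)
      = ∑ v ∈ (Finset.univ : Finset (ZMod p)) \ {1}, quadraticChar (ZMod p) v := by
    refine Finset.sum_nbij' (fun u => 1 + c * u⁻¹) (fun v => c * (v - 1)⁻¹) ?_ ?_ ?_ ?_ ?_
    · intro u hu
      simp only [Finset.mem_sdiff, Finset.mem_univ, Finset.mem_singleton, true_and] at hu ⊢
      intro h
      have : c * u⁻¹ = 0 := by linear_combination h
      rcases mul_eq_zero.mp this with h' | h'
      · exact hc h'
      · exact hu (inv_eq_zero.mp h')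
    · intro v hv
      simp only [Finset.mem_sdiff, Finset.mem_univ, Finset.mem_singleton, true_and] at hv ⊢
      intro h
      rcases mul_eq_zero.mp h with h' | h'
      · exact hc h'
      · exact hv (by
          have := inv_eq_zero.mp h'
          have : v - 1 = 0 := this
          linear_combination this)
    · intro u hu
      simp only [Finset.mem_sdiff, Finset.mem_univ, Finset.mem_singleton, true_and] at hu
      show c * ((1 + c * u⁻¹) - 1)⁻¹ = u
      have h1 : (1 + c * u⁻¹) - 1 = c * u⁻¹ := by ring
      rw [h1, mul_inv, inv_inv, ← mul_assoc, mul_inv_cancel₀ hc, one_mul]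
    · intro v hv
      simp only [Finset.mem_sdiff, Finset.mem_univ, Finset.mem_singleton, true_and] at hv
      have hv1 : v - 1 ≠ 0 := sub_ne_zero.mpr hv
      show 1 + c * (c * (v - 1)⁻¹)⁻¹ = v
      rw [mul_inv, inv_inv, ← mul_assoc, mul_inv_cancel₀ hc, one_mul]
      ring
    · intro u hu
      simp only [Finset.mem_sdiff, Finset.mem_univ, Finset.mem_singleton, true_and] at hu
      have key : u + c = u * (1 + c * u⁻¹) := by
        field_simp
      rw [key, map_mul, ← mul_assoc, ← pow_two, quadraticChar_sq_one hu, one_mul]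
  have h3 : ∑ v ∈ (Finset.univ : Finset (ZMod p)) \ {1}, quadraticChar (ZMod p) v = -1 := by
    rw [Finset.sum_sdiff_eq_sub (Finset.subset_univ _),
      quadraticChar_sum_zero (ringChar_ne_two hodd)]
    simp
  rw [h1, h2, h3]

lemma sum_prod_shift (hodd : p % 4 = 1) (b b' : ZMod p) :
    ∑ t : ZMod p, quadraticChar (ZMod p) (b - t) * quadraticChar (ZMod p) (b' - t)
      = if b = b' then (p : ℤ) - 1 else -1 := by
  classical
  split_ifs with hbb
  · subst hbb
    have : ∀ t : ZMod p,
        quadraticChar (ZMod p) (b - t) * quadraticChar (ZMod p) (b - t)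
          = if t = b then (0 : ℤ) else 1 := by
      intro t
      by_cases h : t = b
      · simp [h]
      · rw [if_neg h, ← pow_two, quadraticChar_sq_one (sub_ne_zero.mpr (fun hh => h hh.symm))]
    rw [Fintype.sum_congr _ _ this]
    have : ∑ t : ZMod p, (if t = b then (0 : ℤ) else 1)
        = ∑ t : ZMod p, ((1 : ℤ) - if t = b then 1 else 0) := by
      apply Fintype.sum_congr; intro t; split_ifs <;> ring
    rw [this, Finset.sum_sub_distrib, Finset.sum_ite_eq' Finset.univ b (fun _ => (1 : ℤ))]
    simp [ZMod.card]
  · have hsub : ∑ t : ZMod p,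
        quadraticChar (ZMod p) (b - t) * quadraticChar (ZMod p) (b' - t)
        = ∑ u : ZMod p, quadraticChar (ZMod p) u * quadraticChar (ZMod p) (u + (b' - b)) := by
      refine Fintype.sum_equiv (Equiv.subLeft b) _ _ (fun t => ?_)
      simp only [Equiv.subLeft_apply]
      congr 1
      congr 1
      ring
    rw [hsub, sum_mul_shift hodd (sub_ne_zero.mpr (fun h => hbb h.symm))]

end Aux

theorem stmt_16 (p : ℕ) [hp : Fact p.Prime] (hq : p % 4 = 1)
    (B : Finset (ZMod p))
    (hB : ∀ b₁ ∈ B, ∀ b₂ ∈ B, b₁ ≠ b₂ → b₁ - b₂ ≠ 0 ∧ IsSquare (b₁ - b₂))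
    (hps : B.card ^ 2 < p) :
    ∃ t : ZMod p, t ∉ B ∧
      (1 + ∑ b ∈ B, quadChar (b - t) < 0 ∨
        (B.card : ℤ) - 1 < 1 + ∑ b ∈ B, quadChar (b - t)) := by
  classical
  by_contra hcon
  push_neg at hcon
  set s : ℕ := B.card with hs
  set χ : ZMod p → ℤ := fun x => quadraticChar (ZMod p) x with hχ
  set f : ZMod p → ℤ := fun t => 1 + ∑ b ∈ B, χ (b - t) with hf
  have hfq : ∀ t : ZMod p, (1 + ∑ b ∈ B, quadChar (b - t)) = f t := by
    intro t
    simp only [hf, hχ]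
    congr 1
    exact Finset.sum_congr rfl (fun b _ => quadChar_eq_quadraticChar hq _)
  have hbound : ∀ t : ZMod p, t ∉ B → 0 ≤ f t ∧ f t ≤ (s : ℤ) - 1 := by
    intro t ht
    obtain ⟨h1, h2⟩ := hcon t ht
    rw [hfq t] at h1 h2
    exact ⟨h1, h2⟩
  -- value on B
  have hfB : ∀ t ∈ B, f t = (s : ℤ) := by
    intro t ht
    have hsum : ∑ b ∈ B, χ (b - t) = (s : ℤ) - 1 := by
      rw [← Finset.add_sum_erase B _ ht]
      have h0 : χ (t - t) = 0 := by simp [hχ]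
      have h1 : ∀ b ∈ B.erase t, χ (b - t) = 1 := by
        intro b hb
        obtain ⟨hbne, hbB⟩ := Finset.mem_erase.mp hb
        obtain ⟨hne0, hsq⟩ := hB b hbB t ht hbne
        simp only [hχ]
        exact (quadraticChar_one_iff_isSquare hne0).mpr hsq
      rw [h0, zero_add, Finset.sum_congr rfl h1, Finset.sum_const, nsmul_eq_mul, mul_one,
        Finset.card_erase_of_mem ht]
      have : 1 ≤ s := Finset.card_pos.mpr ⟨t, ht⟩
      rw [← hs]
      push_cast [Nat.cast_sub this]
      ring
    rw [hf]
    simp only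
    rw [hsum]; ring
  -- total sum
  have hS1 : ∑ t : ZMod p, f t = (p : ℤ) := by
    simp only [hf]
    rw [Finset.sum_add_distrib, Finset.sum_const, Finset.card_univ, ZMod.card,
      Finset.sum_comm]
    have : ∀ b ∈ B, ∑ t : ZMod p, χ (b - t) = 0 := fun b _ => sum_shift hq b
    rw [Finset.sum_congr rfl this]
    simp
  -- total sum of squares
  have hS2 : ∑ t : ZMod p, f t ^ 2 = ((s : ℤ) + 1) * p - s ^ 2 := by
    have hexp : ∀ t : ZMod p,
        f t ^ 2 = 1 + 2 * (∑ b ∈ B, χ (b - t)) + (∑ b ∈ B, χ (b - t)) ^ 2 := by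
      intro t; rw [hf]; ring
    rw [Fintype.sum_congr _ _ hexp]
    rw [Finset.sum_add_distrib, Finset.sum_add_distrib]
    have e1 : ∑ _t : ZMod p, (1 : ℤ) = (p : ℤ) := by
      simp [ZMod.card]
    have e2 : ∑ t : ZMod p, 2 * (∑ b ∈ B, χ (b - t)) = 0 := by
      rw [← Finset.mul_sum, Finset.sum_comm]
      have : ∀ b ∈ B, ∑ t : ZMod p, χ (b - t) = 0 := fun b _ => sum_shift hq b
      rw [Finset.sum_congr rfl this]
      simp
    have e3 : ∑ t : ZMod p, (∑ b ∈ B, χ (b - t)) ^ 2 = (s : ℤ) * ((p : ℤ) - s) := by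
      have expand : ∀ t : ZMod p, (∑ b ∈ B, χ (b - t)) ^ 2
          = ∑ b ∈ B, ∑ b' ∈ B, χ (b - t) * χ (b' - t) := by
        intro t
        rw [pow_two, Finset.sum_mul_sum]
      rw [Fintype.sum_congr _ _ expand, Finset.sum_comm]
      have inner : ∀ b ∈ B, ∑ t : ZMod p, ∑ b' ∈ B, χ (b - t) * χ (b' - t)
          = (p : ℤ) - s := by
        intro b hb
        rw [Finset.sum_comm]
        have step : ∀ b' ∈ B, ∑ t : ZMod p, χ (b - t) * χ (b' - t)
            = if b = b' then (p : ℤ) - 1 else -1 := by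
          intro b' _
          exact sum_prod_shift hq b b'
        rw [Finset.sum_congr rfl step]
        have : ∀ b' ∈ B, (if b = b' then (p : ℤ) - 1 else -1)
            = -1 + (if b = b' then (p : ℤ) else 0) := by
          intro b' _; split_ifs <;> ring
        rw [Finset.sum_congr rfl this, Finset.sum_add_distrib, Finset.sum_const,
          Finset.sum_ite_eq B b (fun _ => (p : ℤ)), if_pos hb]
        simp only [nsmul_eq_mul, ← hs]
        ring
      rw [Finset.sum_congr rfl inner, Finset.sum_const, nsmul_eq_mul, ← hs]
    rw [e1, e2, e3]
    ring
  -- split over B and complement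
  have hsplit1 : ∑ t ∈ Bᶜ, f t = (p : ℤ) - s * s := by
    have := Finset.sum_add_sum_compl B f
    rw [hS1] at this
    have hB' : ∑ t ∈ B, f t = (s : ℤ) * s := by
      rw [Finset.sum_congr rfl hfB, Finset.sum_const, nsmul_eq_mul, ← hs]
    linarith [this, hB']
  have hsplit2 : ∑ t ∈ Bᶜ, f t ^ 2 = ((s : ℤ) + 1) * p - s ^ 2 - s * s ^ 2 := by
    have := Finset.sum_add_sum_compl B (fun t => f t ^ 2)
    rw [hS2] at this
    have hB' : ∑ t ∈ B, f t ^ 2 = (s : ℤ) * s ^ 2 := by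
      have : ∀ t ∈ B, f t ^ 2 = (s : ℤ) ^ 2 := by
        intro t ht; rw [hfB t ht]
      rw [Finset.sum_congr rfl this, Finset.sum_const, nsmul_eq_mul, ← hs]
    linarith [this, hB']
  -- pointwise inequality on complement
  have hineq : ∑ t ∈ Bᶜ, f t ^ 2 ≤ ((s : ℤ) - 1) * ∑ t ∈ Bᶜ, f t := by
    rw [Finset.mul_sum]
    apply Finset.sum_le_sum
    intro t ht
    have ht' : t ∉ B := Finset.mem_compl.mp ht
    obtain ⟨h0, h1⟩ := hbound t ht'
    calc f t ^ 2 = f t * f t := sq (f t) ▸ (pow_two (f t))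
      _ ≤ ((s : ℤ) - 1) * f t := mul_le_mul_of_nonneg_right h1 h0
  rw [hsplit1, hsplit2] at hineq
  have hp' : (s : ℤ) ^ 2 < (p : ℤ) := by exact_mod_cast hps
  nlinarith [hineq, hp', sq_nonneg ((s : ℤ))]
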